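/- Let a < b be real numbers and let μ be a Borel probability measure on ℝ whose support is an infinite set contained in the interval [a, b], and assume that μ([b − ε, b]) > 0 for every ε > 0. Let (P_n)_{n ≥ 0} be a sequence of real polynomials such that deg P_n = n for every n, such that ∫ P_n · P_m dμ = 0 whenever n ≠ m, and normalized so that P_n(b) = 1 for every n. Then P_n'(b) → +∞ as n → ∞. -/

import Mathlib

open MeasureTheory Filter Polynomial

/-- The (topological) support of a Borel measure on `ℝ`: the set of points every
neighbourhood of which has positive measure. -/
def measureSupport (μ : Measure ℝ) : Set ℝ :=
  {x : ℝ | ∀ U ∈ nhds x, 0 < μ U}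

lemma measureSupport_compl_null (μ : Measure ℝ) : μ (measureSupport μ)ᶜ = 0 := by
  classical
  have hsub : (measureSupport μ)ᶜ ⊆
      ⋃ p : ℚ × ℚ, ⋃ (_ : μ (Set.Ioo (p.1 : ℝ) (p.2 : ℝ)) = 0), Set.Ioo (p.1 : ℝ) (p.2 : ℝ) := by
    intro x hx
    simp only [measureSupport, Set.mem_compl_iff, Set.mem_setOf_eq, not_forall] at hx
    obtain ⟨U, hU, hμU⟩ := hx
    have hμU0 : μ U = 0 := by
      have := not_lt.mp hμU
      exact le_antisymm this zero_le
    obtain ⟨l, u, hxl, hlu⟩ := mem_nhds_iff_exists_Ioo_subset.mp hU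
    obtain ⟨q, hlq, hqx⟩ := exists_rat_btwn hxl.1
    obtain ⟨r, hxr, hru⟩ := exists_rat_btwn hxl.2
    refine Set.mem_iUnion.mpr ⟨(q, r), Set.mem_iUnion.mpr ⟨?_, hqx, hxr⟩⟩
    refine measure_mono_null (fun y hy => hlu ⟨?_, ?_⟩) hμU0
    · exact lt_trans hlq hy.1
    · exact lt_trans hy.2 hru
  refine measure_mono_null hsub (measure_iUnion_null fun p => ?_)
  by_cases h : μ (Set.Ioo (p.1 : ℝ) (p.2 : ℝ)) = 0
  · simpa [h] using h
  · simp [h]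

lemma integrable_eval (μ : Measure ℝ) [IsFiniteMeasure μ] {a b : ℝ}
    (h0 : μ (Set.Icc a b)ᶜ = 0) (p : Polynomial ℝ) :
    Integrable (fun x => p.eval x) μ := by
  obtain ⟨C, hC⟩ := (isCompact_Icc (a := a) (b := b)).exists_bound_of_continuousOn
    (p.continuous.continuousOn)
  have hae : ∀ᵐ x ∂μ, x ∈ Set.Icc a b := by
    rw [ae_iff]
    exact h0
  refine ⟨p.continuous.aestronglyMeasurable, HasFiniteIntegral.of_bounded (C := C) ?_⟩
  filter_upwards [hae] with x hx using hC x hx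

lemma sign_const {R : Polynomial ℝ} {a b : ℝ} (hR : R ≠ 0)
    (heven : ∀ r ∈ Set.Icc a b, Even (R.roots.count r))
    {x y : ℝ} (hx : x ∈ Set.Icc a b) (hy : y ∈ Set.Icc a b) :
    0 ≤ R.eval x * R.eval y := by
  classical
  obtain ⟨g, hfac, -, hg0⟩ := R.exists_prod_multiset_X_sub_C_mul
  have hgne : g ≠ 0 := by
    rintro rfl
    rw [mul_zero] at hfac
    exact hR hfac.symm
  have hgroot : ∀ z : ℝ, g.eval z ≠ 0 := by
    intro z hz
    have : z ∈ g.roots := (mem_roots hgne).mpr hz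
    simp [hg0] at this
  have hgsame : 0 < g.eval x * g.eval y := by
    rcases lt_trichotomy (g.eval x * g.eval y) 0 with h | h | h
    · exfalso
      have h0 : (0 : ℝ) ∈ Set.uIcc (g.eval x) (g.eval y) := by
        rcases mul_neg_iff.mp h with ⟨h1, h2⟩ | ⟨h1, h2⟩
        · exact Set.mem_uIcc.mpr (Or.inr ⟨h2.le, h1.le⟩)
        · exact Set.mem_uIcc.mpr (Or.inl ⟨h1.le, h2.le⟩)
      obtain ⟨z, -, hz⟩ := intermediate_value_uIcc (g.continuous.continuousOn (s := Set.uIcc x y)) h0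
      exact hgroot z hz
    · exact absurd h (mul_ne_zero (hgroot x) (hgroot y))
    · exact h
  have hev : ∀ t : ℝ, R.eval t = (R.roots.map fun r => t - r).prod * g.eval t := by
    intro t
    conv_lhs => rw [← hfac]
    rw [eval_mul, eval_multiset_prod, Multiset.map_map]
    simp
  have hrw : R.eval x * R.eval y =
      (R.roots.map fun r => (x - r) * (y - r)).prod * (g.eval x * g.eval y) := by
    rw [hev x, hev y, mul_mul_mul_comm, ← Multiset.prod_map_mul]
  rw [hrw]
  refine mul_nonneg ?_ hgsame.le
  rw [Finset.prod_multiset_map_count]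
  refine Finset.prod_nonneg fun r hr => ?_
  by_cases hrab : r ∈ Set.Icc a b
  · exact (heven r hrab).pow_nonneg _
  · refine pow_nonneg ?_ _
    simp only [Set.mem_Icc, not_and_or, not_le] at hrab
    rcases hrab with h | h
    · nlinarith [hx.1, hy.1]
    · nlinarith [hx.2, hy.2]

lemma deriv_bound {a b : ℝ} (hab : a < b) (s : Multiset ℝ)
    (h : ∀ r ∈ s, a ≤ r ∧ r < b) :
    0 < ((s.map fun r => X - C r).prod).eval b ∧
      (Multiset.card s : ℝ) * ((s.map fun r => X - C r).prod).eval b ≤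
        (b - a) * (((s.map fun r => X - C r).prod).derivative.eval b) := by
  induction s using Multiset.induction with
  | empty => simp
  | cons r t ih =>
    obtain ⟨hq, hq'⟩ := ih fun x hx => h x (Multiset.mem_cons_of_mem hx)
    obtain ⟨hr1, hr2⟩ := h r (Multiset.mem_cons_self r t)
    set q := ((t.map fun r => X - C r).prod) with hqdef
    have hcons : ((r ::ₘ t).map fun r => X - C r).prod = (X - C r) * q := by
      rw [Multiset.map_cons, Multiset.prod_cons]
    rw [hcons]
    have hd : ((X - C r) * q).derivative = q + (X - C r) * q.derivative := by
      rw [derivative_mul]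
      simp
    rw [hd]
    simp only [eval_add, eval_mul, eval_sub, eval_X, eval_C, Multiset.card_cons]
    constructor
    · nlinarith
    · push_cast
      nlinarith [mul_le_mul_of_nonneg_left hq' (le_of_lt (by linarith : (0:ℝ) < b - r))]

lemma orth_lower (μ : Measure ℝ) [IsFiniteMeasure μ] {a b : ℝ}
    (h0 : μ (Set.Icc a b)ᶜ = 0)
    (P : ℕ → Polynomial ℝ)
    (hdeg : ∀ n : ℕ, (P n).degree = n)
    (horth : ∀ n m : ℕ, n ≠ m → ∫ x, (P n).eval x * (P m).eval x ∂μ = 0)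
    (hnorm : ∀ n : ℕ, (P n).eval b = 1) :
    ∀ (n : ℕ) (Q : Polynomial ℝ), Q.degree < (n : ℕ) →
      ∫ x, (P n).eval x * Q.eval x ∂μ = 0 := by
  have hPne : ∀ n, P n ≠ 0 := by
    intro n h
    have := hdeg n
    rw [h, degree_zero] at this
    simp at this
  have hnat : ∀ n, (P n).natDegree = n := fun n => natDegree_eq_of_degree_eq_some (hdeg n)
  have hP0 : P 0 = 1 := by
    have h1 : P 0 = C ((P 0).coeff 0) := eq_C_of_natDegree_le_zero (le_of_eq (hnat 0))
    have h2 := hnorm 0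
    rw [h1, eval_C] at h2
    rw [h1, h2, map_one]
  suffices key : ∀ (k n : ℕ) (Q : Polynomial ℝ), Q.natDegree ≤ k → Q.degree < (n : ℕ) →
      ∫ x, (P n).eval x * Q.eval x ∂μ = 0 by
    intro n Q hQ
    exact key Q.natDegree n Q le_rfl hQ
  intro k
  induction k with
  | zero =>
    intro n Q hQk hQd
    rcases eq_or_ne Q 0 with rfl | hQ0
    · simp
    have hn : n ≠ 0 := by
      rintro rfl
      rw [degree_eq_natDegree hQ0] at hQd
      exact absurd hQd (by exact_mod_cast Nat.not_lt_zero Q.natDegree)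
    have hQC : Q = C (Q.coeff 0) := eq_C_of_natDegree_le_zero hQk
    have hfun : (fun x => (P n).eval x * Q.eval x) =
        fun x => Q.coeff 0 * ((P n).eval x * (P 0).eval x) := by
      funext x
      rw [hP0]
      conv_lhs => rw [hQC]
      simp [eval_C]
      ring
    rw [hfun, integral_const_mul, horth n 0 hn, mul_zero]
  | succ k ih =>
    intro n Q hQk hQd
    rcases le_or_gt Q.natDegree k with h | h
    · exact ih n Q h hQd
    have hdQ : Q.natDegree = k + 1 := le_antisymm hQk h
    have hQ0 : Q ≠ 0 := by
      intro hq
      rw [hq, natDegree_zero] at hdQ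
      exact Nat.succ_ne_zero k hdQ.symm
    have hQdeg : Q.degree = ((k + 1 : ℕ) : WithBot ℕ) := by
      rw [degree_eq_natDegree hQ0, hdQ]
    have hdn : k + 1 < n := by
      rw [hQdeg] at hQd
      exact_mod_cast hQd
    set d := k + 1 with hd
    have hPdne : (P d).leadingCoeff ≠ 0 := leadingCoeff_ne_zero.mpr (hPne d)
    set c := Q.leadingCoeff / (P d).leadingCoeff with hc
    have hcne : c ≠ 0 := div_ne_zero (leadingCoeff_ne_zero.mpr hQ0) hPdne
    have hdegcd : (C c * P d).degree = Q.degree := by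
      rw [degree_C_mul hcne, hdeg d, hQdeg]
    have hlc : (C c * P d).leadingCoeff = Q.leadingCoeff := by
      rw [leadingCoeff_mul, leadingCoeff_C, hc, div_mul_cancel₀ _ hPdne]
    have hsub : (Q - C c * P d).degree < Q.degree := degree_sub_lt hdegcd.symm hQ0 hlc.symm
    have hsubnat : (Q - C c * P d).natDegree ≤ k := by
      rcases eq_or_ne (Q - C c * P d) 0 with hz | hz
      · simp [hz]
      · have := (degree_eq_natDegree hz) ▸ (hsub.trans_le hQdeg.le)
        have h2 : (Q - C c * P d).natDegree < k + 1 := by exact_mod_cast this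
        omega
    have hsubdeg : (Q - C c * P d).degree < (n : ℕ) := hsub.trans (hQdeg ▸ (by exact_mod_cast hdn))
    have h1 := ih n (Q - C c * P d) hsubnat hsubdeg
    have h2 := horth n d (by omega)
    have hi1 : Integrable (fun x => (P n).eval x * (Q - C c * P d).eval x) μ := by
      have := integrable_eval μ h0 ((P n) * (Q - C c * P d))
      simpa [eval_mul] using this
    have hi2 : Integrable (fun x => c * ((P n).eval x * (P d).eval x)) μ := by
      have := integrable_eval μ h0 ((P n) * (P d))
      exact (by simpa [eval_mul] using this : Integrable (fun x => (P n).eval x * (P d).eval x) μ).const_mul c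
    have hfun : (fun x => (P n).eval x * Q.eval x) =
        fun x => (P n).eval x * (Q - C c * P d).eval x + c * ((P n).eval x * (P d).eval x) := by
      funext x
      simp [eval_sub, eval_mul, eval_C]
      ring
    rw [hfun, integral_add hi1 hi2, h1, integral_const_mul, h2, mul_zero, add_zero]

lemma roots_structure
    (a b : ℝ) (μ : Measure ℝ) [IsProbabilityMeasure μ]
    (hsupp_sub : measureSupport μ ⊆ Set.Icc a b)
    (hsupp_inf : (measureSupport μ).Infinite)
    (P : ℕ → Polynomial ℝ)
    (hdeg : ∀ n : ℕ, (P n).degree = n)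
    (horth : ∀ n m : ℕ, n ≠ m → ∫ x, (P n).eval x * (P m).eval x ∂μ = 0)
    (hnorm : ∀ n : ℕ, (P n).eval b = 1) (n : ℕ) :
    Multiset.card (P n).roots = n ∧ ∀ r ∈ (P n).roots, a ≤ r ∧ r < b := by
  classical
  have h0 : μ (Set.Icc a b)ᶜ = 0 :=
    measure_mono_null (Set.compl_subset_compl.mpr hsupp_sub) (measureSupport_compl_null μ)
  have hae : ∀ᵐ x ∂μ, x ∈ Set.Icc a b := by rw [ae_iff]; exact h0
  have hPne : ∀ m, P m ≠ 0 := by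
    intro m h
    have := hdeg m
    rw [h, degree_zero] at this
    simp at this
  have hnat : ∀ m, (P m).natDegree = m := fun m => natDegree_eq_of_degree_eq_some (hdeg m)
  set T := (P n).roots.toFinset.filter
    (fun r => r ∈ Set.Icc a b ∧ Odd (Multiset.count r (P n).roots)) with hT
  have hTicc : ∀ r ∈ T, r ∈ Set.Icc a b := fun r hr => (Finset.mem_filter.mp hr).2.1
  have hTcard : n ≤ T.card := by
    by_contra hlt
    push_neg at hlt
    set Q := ∏ r ∈ T, (X - C r) with hQdef
    have hQmonic : Q.Monic := monic_prod_of_monic _ _ fun r _ => monic_X_sub_C r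
    have hQnat : Q.natDegree = T.card := by
      rw [hQdef, natDegree_prod _ _ fun r _ => (monic_X_sub_C r).ne_zero]
      simp [natDegree_X_sub_C]
    have hQdeg : Q.degree = (T.card : ℕ) := by
      rw [degree_eq_natDegree hQmonic.ne_zero, hQnat]
    have hint0 : ∫ x, (P n).eval x * Q.eval x ∂μ = 0 :=
      orth_lower μ h0 P hdeg horth hnorm n Q (by rw [hQdeg]; exact_mod_cast hlt)
    set R := P n * Q with hRdef
    have hR0 : R ≠ 0 := mul_ne_zero (hPne n) hQmonic.ne_zero
    have hQroots : Q.roots = T.val := roots_prod_X_sub_C T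
    have heven : ∀ r ∈ Set.Icc a b, Even (R.roots.count r) := by
      intro r hr
      rw [count_roots, hRdef, rootMultiplicity_mul hR0]
      have hQcount : rootMultiplicity r Q = if r ∈ T then 1 else 0 := by
        rw [← count_roots, hQroots]
        split_ifs with h
        · exact Multiset.count_eq_one_of_mem T.nodup h
        · exact Multiset.count_eq_zero_of_notMem h
      rw [hQcount, ← count_roots]
      by_cases hodd : Odd (Multiset.count r (P n).roots)
      · have hmem : r ∈ T := by
          refine Finset.mem_filter.mpr ⟨Multiset.mem_toFinset.mpr ?_, hr, hodd⟩
          exact Multiset.count_pos.mp hodd.pos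
        rw [if_pos hmem]
        exact hodd.add_one
      · have hmem : r ∉ T := fun h => hodd (Finset.mem_filter.mp h).2.2
        rw [if_neg hmem, Nat.add_zero]
        exact Nat.not_odd_iff_even.mp hodd
    have hsign : ∀ x ∈ Set.Icc a b, ∀ y ∈ Set.Icc a b, 0 ≤ R.eval x * R.eval y :=
      fun x hx y hy => sign_const hR0 heven hx hy
    have hcases : (∀ x ∈ Set.Icc a b, 0 ≤ R.eval x) ∨ (∀ x ∈ Set.Icc a b, R.eval x ≤ 0) := by
      by_cases hsgn : ∀ x ∈ Set.Icc a b, R.eval x ≤ 0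
      · exact Or.inr hsgn
      · push_neg at hsgn
        obtain ⟨x0, hx0, hx0'⟩ := hsgn
        refine Or.inl fun x hx => ?_
        nlinarith [hsign x hx x0 hx0]
    have hRint : Integrable (fun x => R.eval x) μ := integrable_eval μ h0 R
    have hRI : ∫ x, R.eval x ∂μ = 0 := by
      rw [show (fun x => R.eval x) = fun x => (P n).eval x * Q.eval x by
        funext x; rw [hRdef, eval_mul]]
      exact hint0
    have hz : ∀ᵐ x ∂μ, R.eval x = 0 := by
      rcases hcases with hc | hc
      · have hnn : 0 ≤ᵐ[μ] fun x => R.eval x := hae.mono fun x hx => hc x hx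
        have := (integral_eq_zero_iff_of_nonneg_ae hnn hRint).mp hRI
        filter_upwards [this] with x hx using hx
      · have hnn : 0 ≤ᵐ[μ] fun x => -R.eval x := hae.mono fun x hx => by
          simpa using hc x hx
        have hRI' : ∫ x, -R.eval x ∂μ = 0 := by rw [integral_neg, hRI, neg_zero]
        have := (integral_eq_zero_iff_of_nonneg_ae hnn hRint.neg).mp hRI'
        filter_upwards [this] with x hx using by simpa using hx
    have hnull : μ {x | R.eval x ≠ 0} = 0 := by
      rw [← ae_iff] at *
      exact hz
    have hsubfin : measureSupport μ ⊆ {x | R.eval x = 0} := by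
      intro x hx
      by_contra hxr
      have hopen : IsOpen {y : ℝ | R.eval y ≠ 0} := by
        have : {y : ℝ | R.eval y ≠ 0} = (fun y => R.eval y) ⁻¹' {0}ᶜ := rfl
        rw [this]
        exact isClosed_singleton.isOpen_compl.preimage R.continuous
      have hmem : {y : ℝ | R.eval y ≠ 0} ∈ nhds x := hopen.mem_nhds hxr
      have := hx _ hmem
      rw [hnull] at this
      exact lt_irrefl _ this
    exact hsupp_inf ((finite_setOf_isRoot hR0).subset hsubfin)
  have h1 : T.card ≤ (P n).roots.toFinset.card :=
    Finset.card_le_card (Finset.filter_subset _ _)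
  have h2 : (P n).roots.toFinset.card ≤ Multiset.card (P n).roots :=
    Multiset.toFinset_card_le _
  have h3 : Multiset.card (P n).roots ≤ n := (card_roots' (P n)).trans_eq (hnat n)
  have hcard : Multiset.card (P n).roots = n := le_antisymm h3 (hTcard.trans (h1.trans h2))
  have hTeq : T = (P n).roots.toFinset :=
    Finset.eq_of_subset_of_card_le (Finset.filter_subset _ _) (by omega)
  refine ⟨hcard, fun r hr => ?_⟩
  have hrT : r ∈ T := hTeq ▸ Multiset.mem_toFinset.mpr hr
  have hricc := hTicc r hrT
  refine ⟨hricc.1, lt_of_le_of_ne hricc.2 fun h => ?_⟩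
  subst h
  have : (P n).eval r = 0 := (mem_roots (hPne n)).mp hr
  rw [hnorm n] at this
  exact one_ne_zero this

/-- Let `a < b` and let `μ` be a Borel probability measure on `ℝ`
whose support is infinite and contained in `[a, b]`, with `μ([b - ε, b]) > 0`
for every `ε > 0`. If `(P n)` is a sequence of real polynomials with
`deg (P n) = n`, orthogonal with respect to `μ`, and normalized by
`P n (b) = 1`, then `(P n)' (b) → ∞`. -/
theorem deriv_orthogonal_polynomials_tendsto_atTop
    (a b : ℝ) (hab : a < b) (μ : Measure ℝ) [IsProbabilityMeasure μ]
    (hsupp_sub : measureSupport μ ⊆ Set.Icc a b)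
    (hsupp_inf : (measureSupport μ).Infinite)
    (hb : ∀ ε : ℝ, 0 < ε → 0 < μ (Set.Icc (b - ε) b))
    (P : ℕ → Polynomial ℝ)
    (hdeg : ∀ n : ℕ, (P n).degree = n)
    (horth : ∀ n m : ℕ, n ≠ m → ∫ x, (P n).eval x * (P m).eval x ∂μ = 0)
    (hnorm : ∀ n : ℕ, (P n).eval b = 1) :
    Tendsto (fun n : ℕ => ((P n).derivative).eval b) atTop atTop := by
  have hnat : ∀ m, (P m).natDegree = m := fun m => natDegree_eq_of_degree_eq_some (hdeg m)
  have hroots := roots_structure a b μ hsupp_sub hsupp_inf P hdeg horth hnorm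
  have hbound : ∀ n : ℕ, (n : ℝ) / (b - a) ≤ ((P n).derivative).eval b := by
    intro n
    obtain ⟨hcard, hmem⟩ := hroots n
    have hfac := C_leadingCoeff_mul_prod_multiset_X_sub_C (p := P n) (hcard.trans (hnat n).symm)
    set q := (((P n).roots).map fun r => X - C r).prod with hq
    obtain ⟨hqpos, hqb⟩ := deriv_bound hab (P n).roots hmem
    have heval : (P n).leadingCoeff * q.eval b = 1 := by
      have := congrArg (eval b) hfac
      rwa [eval_mul, eval_C, hnorm n] at this
    have hcpos : 0 < (P n).leadingCoeff := by nlinarith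
    have hder : ((P n).derivative).eval b = (P n).leadingCoeff * (q.derivative.eval b) := by
      conv_lhs => rw [← hfac]
      rw [derivative_mul, derivative_C]
      simp [eval_add, eval_mul, eval_C]
    rw [hder, div_le_iff₀ (by linarith : (0:ℝ) < b - a)]
    rw [hcard] at hqb
    nlinarith [mul_le_mul_of_nonneg_left hqb hcpos.le]
  exact tendsto_atTop_mono hbound
    (Tendsto.atTop_div_const (by linarith) tendsto_natCast_atTop_atTop)
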